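/- Let c, s be natural numbers, let v₂, v₃, v₄, v₅ : Fin c → ZMod 2, and let w : Fin s → (Fin c → ZMod 2). Let M' be the (5+s) × (2+c) matrix over ZMod 2 whose rows are: (1,1,0,…,0); (1,1,v₂); (1,1,v₃); (1,0,v₄); (0,1,v₅); and (0,0,w i) for each i, where in each row the first two coordinates are as indicated and the remaining c coordinates are the indicated vector. Let M be the (3+s) × c matrix over ZMod 2 whose rows are v₂, v₃, v₄ + v₅, and w i for each i. Then Matrix.rank M' = Matrix.rank M + 2. -/

import Mathlib

open Matrix Submodule Module

abbrev F2 := ZMod 2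

noncomputable def eAppend (c : ℕ) :
    (Fin (2 + c) → F2) ≃ₗ[F2] (Fin 2 → F2) × (Fin c → F2) :=
  (LinearEquiv.funCongrLeft F2 F2 finSumFinEquiv).trans
    (LinearEquiv.sumArrowLequivProdArrow _ _ _ _)

lemma eAppend_apply {c : ℕ} (a : Fin 2 → F2) (b : Fin c → F2) :
    eAppend c (Fin.append a b) = (a, b) := by
  ext i
  · simp [eAppend, LinearEquiv.funCongrLeft, Fin.append_left]
  · simp [eAppend, LinearEquiv.funCongrLeft, Fin.append_right]

noncomputable def shearL {c : ℕ} (v : Fin c → F2) :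
    ((Fin 2 → F2) × (Fin c → F2)) →ₗ[F2] ((Fin 2 → F2) × (Fin c → F2)) where
  toFun p := (p.1, p.2 + (p.1 0 + p.1 1) • v)
  map_add' p q := by
    ext i
    · rfl
    · simp [add_smul]; ring
  map_smul' r p := by
    ext i
    · rfl
    · simp [smul_smul, add_smul, mul_add]; try ring

lemma f2_two_eq_zero : (2 : F2) = 0 := by decide

noncomputable def shearE {c : ℕ} (v : Fin c → F2) :
    ((Fin 2 → F2) × (Fin c → F2)) ≃ₗ[F2] ((Fin 2 → F2) × (Fin c → F2)) :=
  LinearEquiv.ofLinear (shearL v) (shearL v)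
    (by ext p <;> simp [shearL, add_smul] <;> ring_nf <;> simp [f2_two_eq_zero])
    (by ext p <;> simp [shearL, add_smul] <;> ring_nf <;> simp [f2_two_eq_zero])

lemma range_fin_append {α : Type*} {m n : ℕ} (u : Fin m → α) (v : Fin n → α) :
    Set.range (Fin.append u v) = Set.range u ∪ Set.range v := by
  ext x
  constructor
  · rintro ⟨i, rfl⟩
    refine Fin.addCases (fun j => ?_) (fun j => ?_) i
    · exact Or.inl ⟨j, (Fin.append_left u v j).symm⟩
    · exact Or.inr ⟨j, (Fin.append_right u v j).symm⟩
  · rintro (⟨j, rfl⟩ | ⟨j, rfl⟩)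
    · exact ⟨Fin.castAdd n j, Fin.append_left u v j⟩
    · exact ⟨Fin.natAdd m j, Fin.append_right u v j⟩

noncomputable def subProdEquiv {R M N : Type*} [Ring R] [AddCommGroup M] [AddCommGroup N]
    [Module R M] [Module R N] (p : Submodule R M) (q : Submodule R N) :
    ↥(p.prod q) ≃ₗ[R] ↥p × ↥q where
  toFun x := (⟨x.1.1, x.2.1⟩, ⟨x.1.2, x.2.2⟩)
  invFun x := ⟨(x.1.1, x.2.1), ⟨x.1.2, x.2.2⟩⟩
  map_add' _ _ := rfl
  map_smul' _ _ := rfl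
  left_inv _ := rfl
  right_inv _ := rfl

lemma f2_add_self {c : ℕ} (v : Fin c → F2) : v + v = 0 := by
  ext i; exact CharTwo.add_self_eq_zero (v i)

/-- Lemma 3 (linear algebra content): if `M'` is the incidence matrix obtained from `M`
after a second Reidemeister move, then `rank M' = rank M + 2`. -/
theorem stmt_0 (c s : ℕ) (v₂ v₃ v₄ v₅ : Fin c → ZMod 2) (w : Fin s → Fin c → ZMod 2) :
    Matrix.rank
      (Fin.append
        ![Fin.append (![1, 1] : Fin 2 → ZMod 2) (0 : Fin c → ZMod 2),
          Fin.append (![1, 1] : Fin 2 → ZMod 2) v₂,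
          Fin.append (![1, 1] : Fin 2 → ZMod 2) v₃,
          Fin.append (![1, 0] : Fin 2 → ZMod 2) v₄,
          Fin.append (![0, 1] : Fin 2 → ZMod 2) v₅]
        (fun i => Fin.append (![0, 0] : Fin 2 → ZMod 2) (w i)) :
        Matrix (Fin (5 + s)) (Fin (2 + c)) (ZMod 2)) =
    Matrix.rank
      (Fin.append ![v₂, v₃, v₄ + v₅] w : Matrix (Fin (3 + s)) (Fin c) (ZMod 2)) + 2 := by
  classical
  set A : Fin 5 → (Fin (2 + c) → F2) :=
    ![Fin.append (![1, 1] : Fin 2 → F2) (0 : Fin c → F2),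
      Fin.append (![1, 1] : Fin 2 → F2) v₂,
      Fin.append (![1, 1] : Fin 2 → F2) v₃,
      Fin.append (![1, 0] : Fin 2 → F2) v₄,
      Fin.append (![0, 1] : Fin 2 → F2) v₅] with hA
  set B : Fin s → (Fin (2 + c) → F2) :=
    (fun i => Fin.append (![0, 0] : Fin 2 → F2) (w i)) with hB
  set W : Submodule F2 (Fin c → F2) :=
    Submodule.span F2 (Set.range (Fin.append ![v₂, v₃, v₄ + v₅] w)) with hW
  let E : (Fin (2 + c) → F2) ≃ₗ[F2] (Fin 2 → F2) × (Fin c → F2) :=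
    (eAppend c).trans (shearE v₄)
  have hE : ∀ (a : Fin 2 → F2) (b : Fin c → F2),
      E (Fin.append a b) = (a, b + (a 0 + a 1) • v₄) := by
    intro a b
    simp [E, shearE, shearL, eAppend_apply]
  -- values on generators
  have h11 : (1 + 1 : F2) = 0 := by decide
  have h10 : (1 + 0 : F2) = 1 := by decide
  have h01 : (0 + 1 : F2) = 1 := by decide
  have hg0 : E (A 0) = (![1, 1], (0 : Fin c → F2)) := by
    simp [hA, hE, h11]
  have hg1 : E (A 1) = (![1, 1], v₂) := by simp [hA, hE, h11]
  have hg2 : E (A 2) = (![1, 1], v₃) := by simp [hA, hE, h11]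
  have hg3 : E (A 3) = (![1, 0], (0 : Fin c → F2)) := by
    simp [hA, hE, h10, f2_add_self]
  have hg4 : E (A 4) = (![0, 1], v₄ + v₅) := by
    simp [hA, hE, h01, add_comm]
  have hgB : ∀ i, E (B i) = (![0, 0], w i) := by
    intro i; simp [hB, hE, show (0 + 0 : F2) = 0 by decide]
  -- rows of M are in W
  have hv2W : v₂ ∈ W := Submodule.subset_span
    ⟨Fin.castAdd s 0, by rw [Fin.append_left]; rfl⟩
  have hv3W : v₃ ∈ W := Submodule.subset_span
    ⟨Fin.castAdd s 1, by rw [Fin.append_left]; rfl⟩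
  have hv45W : v₄ + v₅ ∈ W := Submodule.subset_span
    ⟨Fin.castAdd s 2, by rw [Fin.append_left]; rfl⟩
  have hwW : ∀ i, w i ∈ W := fun i => Submodule.subset_span
    ⟨Fin.natAdd 3 i, by rw [Fin.append_right]⟩
  have hcomp : ⇑E ∘ (Fin.append A B) = Fin.append (⇑E ∘ A) (⇑E ∘ B) := by
    funext i
    refine Fin.addCases (fun j => ?_) (fun j => ?_) i <;>
      simp [Fin.append_left, Fin.append_right]
  have key : Submodule.map (E : (Fin (2+c) → F2) →ₗ[F2] _)
      (Submodule.span F2 (Set.range (Fin.append A B))) =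
      (⊤ : Submodule F2 (Fin 2 → F2)).prod W := by
    rw [Submodule.map_span, ← Set.range_comp]
    simp only [LinearEquiv.coe_coe]
    rw [hcomp, range_fin_append, Submodule.span_union]
    apply le_antisymm
    · apply sup_le
      · rw [Submodule.span_le]
        rintro x ⟨j, rfl⟩
        fin_cases j
        · simpa [Submodule.mem_prod, hg0] using W.zero_mem
        · simpa [Submodule.mem_prod, hg1] using hv2W
        · simpa [Submodule.mem_prod, hg2] using hv3W
        · simpa [Submodule.mem_prod, hg3] using W.zero_mem
        · simpa [Submodule.mem_prod, hg4] using hv45W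
      · rw [Submodule.span_le]
        rintro x ⟨i, rfl⟩
        simpa [Submodule.mem_prod, hgB i] using hwW i
    · rw [Submodule.prod_le_iff]
      constructor
      · rintro x ⟨y, -, rfl⟩
        have e1 : ((![1,1], (0 : Fin c → F2)) : (Fin 2 → F2) × (Fin c → F2)) ∈
            Submodule.span F2 (Set.range (⇑E ∘ A)) :=
          Submodule.subset_span ⟨0, hg0⟩
        have e2 : ((![1,0], (0 : Fin c → F2)) : (Fin 2 → F2) × (Fin c → F2)) ∈
            Submodule.span F2 (Set.range (⇑E ∘ A)) :=
          Submodule.subset_span ⟨3, hg3⟩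
        have hy : (LinearMap.inl F2 (Fin 2 → F2) (Fin c → F2)) y =
            y 1 • ((![1,1], (0 : Fin c → F2)) : (Fin 2 → F2) × (Fin c → F2)) +
            (y 0 + y 1) • ((![1,0], (0 : Fin c → F2)) : (Fin 2 → F2) × (Fin c → F2)) := by
          refine Prod.ext ?_ (by simp)
          funext i
          fin_cases i <;> simp <;> ring_nf <;> simp [f2_two_eq_zero]
        rw [hy]
        exact add_mem (Submodule.smul_mem _ _ (Submodule.mem_sup_left e1))
          (Submodule.smul_mem _ _ (Submodule.mem_sup_left e2))
      · rw [Submodule.map_le_iff_le_comap, hW, Submodule.span_le]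
        rintro r ⟨i, rfl⟩
        simp only [SetLike.mem_coe, Submodule.mem_comap]
        refine Fin.addCases (fun j => ?_) (fun j => ?_) i
        · rw [Fin.append_left]
          have mA : ∀ k : Fin 5, (⇑E ∘ A) k ∈ Submodule.span F2 (Set.range (⇑E ∘ A)) :=
            fun k => Submodule.subset_span ⟨k, rfl⟩
          fin_cases j
          · have : (LinearMap.inr F2 (Fin 2 → F2) (Fin c → F2)) v₂ = E (A 1) + E (A 0) := by
              rw [hg1, hg0]
              refine Prod.ext ?_ (by simp)
              funext i; fin_cases i <;> simp [f2_two_eq_zero] <;> decide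
            show (LinearMap.inr F2 (Fin 2 → F2) (Fin c → F2)) (v₂) ∈ _
            rw [this]
            exact Submodule.mem_sup_left (add_mem (mA 1) (mA 0))
          · have : (LinearMap.inr F2 (Fin 2 → F2) (Fin c → F2)) v₃ = E (A 2) + E (A 0) := by
              rw [hg2, hg0]
              refine Prod.ext ?_ (by simp)
              funext i; fin_cases i <;> simp [f2_two_eq_zero] <;> decide
            show (LinearMap.inr F2 (Fin 2 → F2) (Fin c → F2)) (v₃) ∈ _
            rw [this]
            exact Submodule.mem_sup_left (add_mem (mA 2) (mA 0))
          · have : (LinearMap.inr F2 (Fin 2 → F2) (Fin c → F2)) (v₄ + v₅) =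
                E (A 4) + E (A 0) + E (A 3) := by
              rw [hg4, hg0, hg3]
              refine Prod.ext ?_ (by simp)
              funext i; fin_cases i <;> simp [f2_two_eq_zero] <;> decide
            show (LinearMap.inr F2 (Fin 2 → F2) (Fin c → F2)) (v₄ + v₅) ∈ _
            rw [this]
            exact Submodule.mem_sup_left (add_mem (add_mem (mA 4) (mA 0)) (mA 3))
        · rw [Fin.append_right]
          have : (LinearMap.inr F2 (Fin 2 → F2) (Fin c → F2)) (w j) = E (B j) := by
            rw [hgB]
            refine Prod.ext ?_ (by simp)
            funext i; fin_cases i <;> simp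
          rw [this]
          exact Submodule.mem_sup_right (Submodule.subset_span ⟨j, rfl⟩)
  have r1 : Matrix.rank (Fin.append A B : Matrix (Fin (5 + s)) (Fin (2 + c)) F2) =
      Module.finrank F2 (Submodule.span F2 (Set.range (Fin.append A B))) :=
    Matrix.rank_eq_finrank_span_row _
  have r2 : Matrix.rank (Fin.append ![v₂, v₃, v₄ + v₅] w : Matrix (Fin (3 + s)) (Fin c) F2) =
      Module.finrank F2 (Submodule.span F2 (Set.range (Fin.append ![v₂, v₃, v₄ + v₅] w))) :=
    Matrix.rank_eq_finrank_span_row _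
  rw [r1, r2]
  have hfin := LinearEquiv.finrank_map_eq E
    (Submodule.span F2 (Set.range (Fin.append A B)))
  rw [key] at hfin
  rw [← hW, ← hfin]
  have h2 : Module.finrank F2 ↥((⊤ : Submodule F2 (Fin 2 → F2)).prod W) =
      Module.finrank F2 ↥(⊤ : Submodule F2 (Fin 2 → F2)) + Module.finrank F2 ↥W := by
    rw [LinearEquiv.finrank_eq (subProdEquiv _ _), Module.finrank_prod]
  rw [h2, finrank_top, Module.finrank_fin_fun, add_comm]
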